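/- Under the hypotheses of the one-step discrepancy bound, if additionally δ(θ) ≥ 2κ/η where η = c and κ = M + (L/2)·μ̄·G², then δ(θ') ≥ (1 + (η/2)·μ)·δ(θ). -/

import Mathlib

theorem compounding_discrepancy
    (d : ℕ) (δ : EuclideanSpace ℝ (Fin d) → ℝ)
    (grad : EuclideanSpace ℝ (Fin d) → EuclideanSpace ℝ (Fin d))
    (L c M G μ μbar : ℝ)
    (hL : ∀ θ Δ : EuclideanSpace ℝ (Fin d),
      |δ (θ + Δ) - δ θ - inner ℝ (grad θ) Δ| ≤ L / 2 * ‖Δ‖ ^ 2)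
    (θ g gs b : EuclideanSpace ℝ (Fin d))
    (hg : g = gs + b)
    (hc : 0 < c)
    (hM : 0 ≤ M) (hG : 0 ≤ G)
    (hbias : inner ℝ (grad θ) b ≥ c * δ θ)
    (hstar : |(inner ℝ (grad θ) gs : ℝ)| ≤ M)
    (hgnorm : ‖g‖ ≤ G)
    (hμ : 0 < μ) (hμbar : μ ≤ μbar)
    (hbig : δ θ ≥ 2 * (M + L / 2 * μbar * G ^ 2) / c) :
    δ (θ + μ • g) ≥ (1 + c / 2 * μ) * δ θ := by
  have hbig' : 2 * (M + L / 2 * μbar * G ^ 2) ≤ c * δ θ := by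
    rw [ge_iff_le, div_le_iff₀ hc] at hbig
    linarith [hbig]
  rcases lt_or_ge L 0 with hLneg | hLpos
  · -- L < 0 forces the space to be trivial
    have hzero : ∀ Δ : EuclideanSpace ℝ (Fin d), Δ = 0 := by
      intro Δ
      have h := hL θ Δ
      have h2 : (0:ℝ) ≤ L / 2 * ‖Δ‖ ^ 2 := le_trans (abs_nonneg _) h
      have hn : ‖Δ‖ = 0 := by
        by_contra hne
        have hpos : 0 < ‖Δ‖ ^ 2 :=
          pow_pos (lt_of_le_of_ne (norm_nonneg _) (Ne.symm hne)) 2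
        have : L / 2 * ‖Δ‖ ^ 2 < 0 :=
          mul_neg_of_neg_of_pos (by linarith) hpos
        linarith
      exact norm_eq_zero.mp hn
    have hb0 : b = 0 := hzero b
    have hδ : δ θ ≤ 0 := by
      rw [hb0, inner_zero_right] at hbias
      nlinarith
    have hmg : μ • g = 0 := hzero _
    rw [hmg, add_zero]
    nlinarith [mul_nonpos_of_nonneg_of_nonpos (mul_nonneg hc.le hμ.le) hδ]
  · have key := hL θ (μ • g)
    have hinner : (inner ℝ (grad θ) (μ • g) : ℝ)
        = μ * ((inner ℝ (grad θ) gs : ℝ) + (inner ℝ (grad θ) b : ℝ)) := by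
      rw [real_inner_smul_right, hg, inner_add_right]
    have hnorm : ‖μ • g‖ = μ * ‖g‖ := by
      rw [norm_smul, Real.norm_eq_abs, abs_of_pos hμ]
    rw [hinner, hnorm] at key
    have hlow := (abs_le.mp key).1
    have hs := (abs_le.mp hstar).1
    have hg0 : (0:ℝ) ≤ ‖g‖ := norm_nonneg g
    nlinarith [hlow, hs, hbias, hbig', mul_nonneg hμ.le (sub_nonneg.mpr hgnorm),
      mul_nonneg (mul_nonneg hLpos hμ.le) (mul_nonneg (sub_nonneg.mpr hgnorm) (add_nonneg hg0 hG)),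
      mul_nonneg (mul_nonneg hLpos (sub_nonneg.mpr hμbar)) (mul_nonneg hμ.le (sq_nonneg G)),
      mul_nonneg hμ.le (sub_nonneg.mpr hs)]
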